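/- Let 0 < α < 4 and set c₁ = 1/2 + √(12/α − 3)/6 and c₂ = 1/2 − √(12/α − 3)/6 (so c₁ > c₂). Then for all integers n, n₁, n₂ with n = n₁ + n₂, |n₁ − c₁ n| ≥ 1, and |n₁ − c₂ n| ≥ 1, one has |n³ − α n₁³ − α n₂³| ≥ (3α(c₁ − c₂)/2) · n². -/

import Mathlib

theorem stmt_8 (α : ℝ) (hα : 0 < α) (hα4 : α < 4)
    (c₁ c₂ : ℝ)
    (hc₁ : c₁ = 1/2 + Real.sqrt (12/α - 3) / 6)
    (hc₂ : c₂ = 1/2 - Real.sqrt (12/α - 3) / 6) :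
    ∀ n n₁ n₂ : ℤ, n = n₁ + n₂ →
      1 ≤ |(n₁ : ℝ) - c₁ * (n : ℝ)| → 1 ≤ |(n₁ : ℝ) - c₂ * (n : ℝ)| →
      3 * α * (c₁ - c₂) / 2 * (n : ℝ) ^ 2 ≤
        |(n : ℝ) ^ 3 - α * (n₁ : ℝ) ^ 3 - α * (n₂ : ℝ) ^ 3| := by
  intro n n₁ n₂ hn h1 h2
  have hxnn : (0:ℝ) ≤ 12/α - 3 := by
    have : (3:ℝ) ≤ 12/α := (le_div_iff₀ hα).2 (by nlinarith)
    linarith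
  set x := Real.sqrt (12/α - 3) with hxdef
  have hx2 : α * x ^ 2 = 12 - 3 * α := by
    rw [hxdef, Real.sq_sqrt hxnn]; field_simp
  have hcs : 0 ≤ c₁ - c₂ := by
    rw [hc₁, hc₂]
    have := Real.sqrt_nonneg (12/α - 3)
    rw [← hxdef] at this
    linarith
  have hn2 : (n₂ : ℝ) = (n : ℝ) - (n₁ : ℝ) := by
    push_cast [hn]; ring
  have key : (n : ℝ) ^ 3 - α * (n₁ : ℝ) ^ 3 - α * (n₂ : ℝ) ^ 3 =
      -(3 * α * ((n:ℝ) * (((n₁:ℝ) - c₁ * n) * ((n₁:ℝ) - c₂ * n)))) := by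
    rw [hn2, hc₁, hc₂]
    linear_combination (-(n:ℝ)^3/12) * hx2
  rw [key, abs_neg]
  simp only [abs_mul]
  rw [abs_of_pos hα, show |(3:ℝ)| = 3 from by norm_num]
  set a := |(n₁ : ℝ) - c₁ * (n : ℝ)| with ha
  set b := |(n₁ : ℝ) - c₂ * (n : ℝ)| with hb
  have hsum : (c₁ - c₂) * |(n:ℝ)| ≤ a + b := by
    have heq : (c₁ - c₂) * |(n:ℝ)| = |((n₁:ℝ) - c₂ * n) - ((n₁:ℝ) - c₁ * n)| := by
      rw [show ((n₁:ℝ) - c₂ * n) - ((n₁:ℝ) - c₁ * n) = (c₁ - c₂) * n by ring,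
        abs_mul, abs_of_nonneg hcs]
    rw [heq, ha, hb]
    calc |((n₁:ℝ) - c₂ * n) - ((n₁:ℝ) - c₁ * n)|
        ≤ |(n₁:ℝ) - c₂ * n| + |(n₁:ℝ) - c₁ * n| := abs_sub _ _
      _ = |(n₁:ℝ) - c₁ * n| + |(n₁:ℝ) - c₂ * n| := by ring
  have hnabs : (n:ℝ)^2 = |(n:ℝ)| * |(n:ℝ)| := by
    rw [← abs_mul, abs_of_nonneg (mul_self_nonneg ((n:ℝ))), sq]
  have h2ab : a + b ≤ 2 * (a * b) := by nlinarith
  have hfin : 3*α/2 * |(n:ℝ)| * ((c₁-c₂) * |(n:ℝ)|) ≤ 3*α/2 * |(n:ℝ)| * (2*(a*b)) :=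
    mul_le_mul_of_nonneg_left (hsum.trans h2ab) (by positivity)
  rw [hnabs]
  nlinarith [hfin]
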